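/- Let q and r be nonzero complex numbers. There exists a 2×2 unitary matrix U = (u_{ij}) such that the algebra automorphism Φ_U of ℂ⟨x₁,x₂⟩ determined by Φ_U(x_i) = u_{i1}x₁ + u_{i2}x₂ maps the two-sided ideal generated by x₁x₂ − q x₂x₁ onto the two-sided ideal generated by x₁x₂ − r x₂x₁, if and only if r = q or r = q^{-1}. -/

import Mathlib

noncomputable section

/-- The free (noncommutative polynomial) algebra `ℂ⟨x₁,x₂⟩`. -/
abbrev FreeAlg2 : Type := MonoidAlgebra ℂ (FreeMonoid (Fin 2))

/-- The generator `x_i` of `ℂ⟨x₁,x₂⟩`. -/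
def Xg (i : Fin 2) : FreeAlg2 :=
  MonoidAlgebra.of ℂ (FreeMonoid (Fin 2)) (FreeMonoid.of i)

/-- Evaluation `p ↦ p(T)`. -/
def evalTuple {A : Type*} [Semiring A] [Algebra ℂ A] (T : Fin 2 → A) :
    FreeAlg2 →ₐ[ℂ] A :=
  MonoidAlgebra.lift ℂ A (FreeMonoid (Fin 2)) (FreeMonoid.lift T)

/-- The unitary change of variables `Φ_U` determined by `Φ_U(x_i) = Σ_j u_{ij} x_j`. -/
def PhiU (U : Matrix (Fin 2) (Fin 2) ℂ) : FreeAlg2 →ₐ[ℂ] FreeAlg2 :=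
  evalTuple (fun i => ∑ j : Fin 2, U i j • Xg j)

lemma evalTuple_Xg {A : Type*} [Semiring A] [Algebra ℂ A] (T : Fin 2 → A) (i : Fin 2) :
    evalTuple T (Xg i) = T i := by
  simp [evalTuple, Xg]

lemma algHom_ext2 (f g : FreeAlg2 →ₐ[ℂ] FreeAlg2)
    (h : ∀ i, f (Xg i) = g (Xg i)) : f = g := by
  refine MonoidAlgebra.algHom_ext' ?_ (Subsingleton.elim _ _)
  refine FreeMonoid.hom_eq fun i => ?_
  exact h i

lemma phiU_Xg (U : Matrix (Fin 2) (Fin 2) ℂ) (i : Fin 2) :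
    PhiU U (Xg i) = U i 0 • Xg 0 + U i 1 • Xg 1 := by
  simp [PhiU, evalTuple_Xg, Fin.sum_univ_two]

lemma phi_g (U : Matrix (Fin 2) (Fin 2) ℂ) (q : ℂ) :
    PhiU U (Xg 0 * Xg 1 - q • (Xg 1 * Xg 0)) =
      (U 0 0 * U 1 0 - q * (U 1 0 * U 0 0)) • (Xg 0 * Xg 0) +
      (U 0 0 * U 1 1 - q * (U 1 0 * U 0 1)) • (Xg 0 * Xg 1) +
      (U 0 1 * U 1 0 - q * (U 1 1 * U 0 0)) • (Xg 1 * Xg 0) +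
      (U 0 1 * U 1 1 - q * (U 1 1 * U 0 1)) • (Xg 1 * Xg 1) := by
  rw [map_sub, map_smul, map_mul, map_mul, phiU_Xg, phiU_Xg]
  simp only [mul_add, add_mul, smul_mul_assoc, mul_smul_comm, smul_smul, smul_sub, smul_add,
    sub_smul]
  module

open Matrix in
def Tmat (r : ℂ) : Fin 2 → Matrix (Fin 6) (Fin 6) ℂ
  | 0 => single 1 0 1 + single 3 1 1 + single 4 2 1
  | 1 => single 2 0 1 + single 4 1 r⁻¹ + single 5 2 1

open Matrix in
lemma Tmat_mul (r : ℂ) :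
    Tmat r 0 * Tmat r 0 = single 3 0 1 ∧
    Tmat r 0 * Tmat r 1 = single 4 0 1 ∧
    Tmat r 1 * Tmat r 0 = single 4 0 r⁻¹ ∧
    Tmat r 1 * Tmat r 1 = single 5 0 1 := by
  refine ⟨?_, ?_, ?_, ?_⟩ <;>
  · simp only [Tmat, add_mul, mul_add]
    simp [Matrix.single_mul_single_same, Matrix.single_mul_single_of_ne,
      (by decide : (0:Fin 6) ≠ 1), (by decide : (0:Fin 6) ≠ 2), (by decide : (1:Fin 6) ≠ 2),
      (by decide : (0:Fin 6) ≠ 4), (by decide : (0:Fin 6) ≠ 5), (by decide : (1:Fin 6) ≠ 4),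
      (by decide : (1:Fin 6) ≠ 5), (by decide : (2:Fin 6) ≠ 4), (by decide : (2:Fin 6) ≠ 5),
      (by decide : (1:Fin 6) ≠ 0), (by decide : (2:Fin 6) ≠ 0), (by decide : (2:Fin 6) ≠ 1)]

lemma evalTuple_gen_r (r : ℂ) (hr : r ≠ 0) :
    evalTuple (Tmat r) (Xg 0 * Xg 1 - r • (Xg 1 * Xg 0)) = 0 := by
  obtain ⟨h00, h01, h10, h11⟩ := Tmat_mul r
  simp only [map_sub, map_smul, map_mul, evalTuple_Xg]
  rw [h01, h10]
  rw [Matrix.smul_single, smul_eq_mul, mul_inv_cancel₀ hr, sub_self]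

lemma key (r : ℂ) (hr : r ≠ 0) (c00 c01 c10 c11 : ℂ)
    (h : c00 • (Xg 0 * Xg 0) + c01 • (Xg 0 * Xg 1) + c10 • (Xg 1 * Xg 0) + c11 • (Xg 1 * Xg 1)
        ∈ TwoSidedIdeal.span {Xg 0 * Xg 1 - r • (Xg 1 * Xg 0)}) :
    c00 = 0 ∧ c11 = 0 ∧ c01 + r⁻¹ * c10 = 0 := by
  have hmem : c00 • (Xg 0 * Xg 0) + c01 • (Xg 0 * Xg 1) + c10 • (Xg 1 * Xg 0)
      + c11 • (Xg 1 * Xg 1) ∈ TwoSidedIdeal.comap (evalTuple (Tmat r))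
        (⊥ : TwoSidedIdeal (Matrix (Fin 6) (Fin 6) ℂ)) := by
    refine TwoSidedIdeal.mem_span_iff.mp h _ ?_
    intro x hx
    rw [Set.mem_singleton_iff] at hx
    subst hx
    rw [SetLike.mem_coe, TwoSidedIdeal.mem_comap, TwoSidedIdeal.mem_bot]
    exact evalTuple_gen_r r hr
  rw [TwoSidedIdeal.mem_comap, TwoSidedIdeal.mem_bot] at hmem
  obtain ⟨h00, h01, h10, h11⟩ := Tmat_mul r
  simp only [map_add, map_smul, map_mul, evalTuple_Xg] at hmem
  rw [h00, h01, h10, h11] at hmem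
  refine ⟨?_, ?_, ?_⟩
  · have := congrFun (congrFun hmem 3) 0
    simpa [Matrix.single] using this
  · have := congrFun (congrFun hmem 5) 0
    simpa [Matrix.single] using this
  · have := congrFun (congrFun hmem 4) 0
    simpa [Matrix.single, mul_comm] using this

lemma smul_mem_tsi (I : TwoSidedIdeal FreeAlg2) (c : ℂ) (x : FreeAlg2) (hx : x ∈ I) :
    c • x ∈ I := by
  rw [Algebra.smul_def]; exact I.mul_mem_left _ _ hx


/-- **Classification for `d = 2`**: a unitary change of variables of `ℂ⟨x₁,x₂⟩` maps the
ideal generated by `x₁x₂ − q x₂x₁` onto the ideal generated by `x₁x₂ − r x₂x₁` if and only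
if `r = q` or `r = q⁻¹`. -/
theorem stmt13 (q r : ℂ) (hq : q ≠ 0) (hr : r ≠ 0) :
    (∃ U ∈ Matrix.unitaryGroup (Fin 2) ℂ,
      ⇑(PhiU U) ''
          ((TwoSidedIdeal.span {Xg 0 * Xg 1 - q • (Xg 1 * Xg 0)} :
            TwoSidedIdeal FreeAlg2) : Set FreeAlg2) =
        ((TwoSidedIdeal.span {Xg 0 * Xg 1 - r • (Xg 1 * Xg 0)} :
          TwoSidedIdeal FreeAlg2) : Set FreeAlg2)) ↔
    (r = q ∨ r = q⁻¹) := by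
  constructor
  · rintro ⟨U, hU, himg⟩
    have hg : PhiU U (Xg 0 * Xg 1 - q • (Xg 1 * Xg 0)) ∈
        ((TwoSidedIdeal.span {Xg 0 * Xg 1 - r • (Xg 1 * Xg 0)} :
          TwoSidedIdeal FreeAlg2) : Set FreeAlg2) := by
      rw [← himg]
      exact ⟨_, TwoSidedIdeal.subset_span (Set.mem_singleton _), rfl⟩
    rw [SetLike.mem_coe, phi_g] at hg
    obtain ⟨e1, e2, e3⟩ := key r hr _ _ _ _ hg
    have hmem := (Unitary.mem_iff.mp hU)
    have row0 : U 0 0 * star (U 0 0) + U 0 1 * star (U 0 1) = 1 := by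
      have := congrFun (congrFun hmem.2 0) 0
      simpa [Matrix.mul_apply, Fin.sum_univ_two, Matrix.conjTranspose_apply,
        Matrix.one_apply] using this
    have row1 : U 1 0 * star (U 1 0) + U 1 1 * star (U 1 1) = 1 := by
      have := congrFun (congrFun hmem.2 1) 1
      simpa [Matrix.mul_apply, Fin.sum_univ_two, Matrix.conjTranspose_apply,
        Matrix.one_apply] using this
    by_cases hq1 : q = 1
    · left
      have hdet : U.det ≠ 0 := by
        intro h0
        have := congrArg Matrix.det hmem.1
        rw [Matrix.det_mul, h0, mul_zero, Matrix.det_one] at this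
        exact zero_ne_one this
      rw [Matrix.det_fin_two] at hdet
      have hD' : (1 - r⁻¹) * (U 0 0 * U 1 1 - U 0 1 * U 1 0) = 0 := by
        rw [hq1] at e3; linear_combination e3
      rcases mul_eq_zero.mp hD' with h | h
      · have : r⁻¹ = 1 := by linear_combination -h
        rw [hq1, ← inv_eq_one.mp this]
      · exact absurd h hdet
    · have h1q : (1 : ℂ) - q ≠ 0 := sub_ne_zero.mpr fun h => hq1 h.symm
      have e1' : U 0 0 * U 1 0 = 0 := by
        rcases mul_eq_zero.mp (show (1 - q) * (U 0 0 * U 1 0) = 0 by linear_combination e1)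
          with h | h
        · exact absurd h h1q
        · exact h
      have e2' : U 0 1 * U 1 1 = 0 := by
        rcases mul_eq_zero.mp (show (1 - q) * (U 0 1 * U 1 1) = 0 by linear_combination e2)
          with h | h
        · exact absurd h h1q
        · exact h
      rcases mul_eq_zero.mp e1' with h00 | h10
      · -- U 0 0 = 0
        have h01 : U 0 1 ≠ 0 := by
          intro h; rw [h00, h] at row0; simp at row0
        have h11 : U 1 1 = 0 := by
          rcases mul_eq_zero.mp e2' with h | h
          · exact absurd h h01
          · exact h
        have h10' : U 1 0 ≠ 0 := by
          intro h; rw [h11, h] at row1; simp at row1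
        right
        have : (r⁻¹ - q) * (U 0 1 * U 1 0) = 0 := by
          rw [h00, h11] at e3; linear_combination e3
        rcases mul_eq_zero.mp this with h | h
        · have hrq : r⁻¹ = q := by linear_combination h
          rw [← hrq, inv_inv]
        · rcases mul_eq_zero.mp h with h | h
          · exact absurd h h01
          · exact absurd h h10'
      · -- U 1 0 = 0
        have h11 : U 1 1 ≠ 0 := by
          intro h; rw [h10, h] at row1; simp at row1
        have h01 : U 0 1 = 0 := by
          rcases mul_eq_zero.mp e2' with h | h
          · exact h
          · exact absurd h h11
        have h00 : U 0 0 ≠ 0 := by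
          intro h; rw [h01, h] at row0; simp at row0
        left
        have : (1 - r⁻¹ * q) * (U 0 0 * U 1 1) = 0 := by
          rw [h10, h01] at e3; linear_combination e3
        rcases mul_eq_zero.mp this with h | h
        · have hrq : r⁻¹ * q = 1 := by linear_combination -h
          exact (inv_mul_eq_one₀ hr).mp hrq
        · rcases mul_eq_zero.mp h with h | h
          · exact absurd h h00
          · exact absurd h h11
  · rintro (rfl | rfl)
    · refine ⟨1, one_mem _, ?_⟩
      have hid : PhiU (1 : Matrix (Fin 2) (Fin 2) ℂ) = AlgHom.id ℂ FreeAlg2 := by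
        refine (algHom_ext2 _ _ fun i => ?_).symm
        rw [phiU_Xg]
        fin_cases i <;> simp [Matrix.one_apply]
      rw [hid]
      simp
    · set U : Matrix (Fin 2) (Fin 2) ℂ := !![0, 1; 1, 0] with hUdef
      have hUmem : U ∈ Matrix.unitaryGroup (Fin 2) ℂ := by
        constructor <;>
        · ext i j
          fin_cases i <;> fin_cases j <;>
            simp [hUdef, Matrix.mul_apply, Fin.sum_univ_two, Matrix.conjTranspose_apply,
              Matrix.one_apply]
      refine ⟨U, hUmem, ?_⟩
      have hσ0 : PhiU U (Xg 0) = Xg 1 := by rw [phiU_Xg]; simp [hUdef]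
      have hσ1 : PhiU U (Xg 1) = Xg 0 := by rw [phiU_Xg]; simp [hUdef]
      have hσσ : (PhiU U).comp (PhiU U) = AlgHom.id ℂ FreeAlg2 := by
        refine algHom_ext2 _ _ fun i => ?_
        fin_cases i <;> simp [hσ0, hσ1]
      have hσg : PhiU U (Xg 0 * Xg 1 - q • (Xg 1 * Xg 0)) =
          (-q) • (Xg 0 * Xg 1 - q⁻¹ • (Xg 1 * Xg 0)) := by
        rw [map_sub, map_smul, map_mul, map_mul, hσ0, hσ1, smul_sub, smul_smul,
          neg_mul, mul_inv_cancel₀ hq]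
        module
      have hσh : PhiU U (Xg 0 * Xg 1 - q⁻¹ • (Xg 1 * Xg 0)) =
          (-q⁻¹) • (Xg 0 * Xg 1 - q • (Xg 1 * Xg 0)) := by
        rw [map_sub, map_smul, map_mul, map_mul, hσ0, hσ1, smul_sub, smul_smul,
          neg_mul, inv_mul_cancel₀ hq]
        module
      ext y
      constructor
      · rintro ⟨x, hx, rfl⟩
        rw [SetLike.mem_coe] at hx ⊢
        have := TwoSidedIdeal.mem_span_iff.mp hx
          (TwoSidedIdeal.comap (PhiU U)
            (TwoSidedIdeal.span {Xg 0 * Xg 1 - q⁻¹ • (Xg 1 * Xg 0)})) ?_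
        · rwa [TwoSidedIdeal.mem_comap] at this
        · intro z hz
          rw [Set.mem_singleton_iff] at hz
          subst hz
          rw [SetLike.mem_coe, TwoSidedIdeal.mem_comap, hσg]
          exact smul_mem_tsi _ _ _ (TwoSidedIdeal.subset_span (Set.mem_singleton _))
      · intro hy
        rw [SetLike.mem_coe] at hy
        refine ⟨PhiU U y, ?_, ?_⟩
        · rw [SetLike.mem_coe]
          have := TwoSidedIdeal.mem_span_iff.mp hy
            (TwoSidedIdeal.comap (PhiU U)
              (TwoSidedIdeal.span {Xg 0 * Xg 1 - q • (Xg 1 * Xg 0)})) ?_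
          · rwa [TwoSidedIdeal.mem_comap] at this
          · intro z hz
            rw [Set.mem_singleton_iff] at hz
            subst hz
            rw [SetLike.mem_coe, TwoSidedIdeal.mem_comap, hσh]
            exact smul_mem_tsi _ _ _ (TwoSidedIdeal.subset_span (Set.mem_singleton _))
        · exact DFunLike.congr_fun hσσ y
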